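/- Let R be a Dedekind domain, M a finitely generated projective R-module, and T ∈ End_R(M) such that for arbitrarily large positive integers s, T is an s-th power in End_R(M). Then every element of the generalized kernel of T (elements killed by some power of T) lies in ker T; that is, ker(T^n) = ker(T) for all n ≥ 1. -/

import Mathlib

theorem stmt_16 (R : Type*) [CommRing R] [IsDomain R] [IsDedekindDomain R]
    (M : Type*) [AddCommGroup M] [Module R M] [Module.Finite R M] [Module.Projective R M]
    (T : M →ₗ[R] M)
    (h : {s : ℕ | 0 < s ∧ ∃ S : M →ₗ[R] M, S ^ s = T}.Infinite) :
    ∀ n : ℕ, 1 ≤ n → LinearMap.ker (T ^ n) = LinearMap.ker T := by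
  classical
  -- M is torsion-free, being projective over a domain
  obtain ⟨s0, hs0⟩ := Module.projective_def.mp ‹Module.Projective R M›
  have htf : NoZeroSMulDivisors R M :=
    by
      haveI : NoZeroSMulDivisors R (M →₀ R) := ⟨fun {c f} hcf => by
        by_cases hc : c = 0
        · exact Or.inl hc
        · right; ext a; have := congrArg (fun g => g a) hcf; simpa [hc] using this⟩
      exact Function.Injective.noZeroSMulDivisors s0 hs0.injective (map_zero _) (map_smul _)
  -- the localized module is a finite-dimensional vector space over Frac(R)
  set K := FractionRing R
  set V := LocalizedModule (nonZeroDivisors R) M with hV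
  haveI : Module.Finite K V :=
    Module.Finite.of_isLocalizedModule (nonZeroDivisors R)
      (LocalizedModule.mkLinearMap (nonZeroDivisors R) M)
  set d := Module.finrank K V with hd
  -- pick s ≥ max d 1 with T = S ^ s
  obtain ⟨s, hs_mem, hs_gt⟩ := h.exists_gt (max d 1)
  obtain ⟨hspos, S, hS⟩ := hs_mem
  have hsd : d ≤ s := le_of_lt (lt_of_le_of_lt (le_max_left _ _) hs_gt)
  intro n hn
  apply le_antisymm
  · -- ker (T^n) ≤ ker T
    intro x hx
    have hx' : (T ^ n) x = 0 := hx
    -- localized endomorphism of S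
    set g : V →ₗ[K] V := LocalizedModule.map (nonZeroDivisors R) S with hg
    have key : ∀ (k : ℕ) (y : M),
        (g ^ k) (LocalizedModule.mk y 1) = LocalizedModule.mk ((S ^ k) y) 1 := by
      intro k
      induction k with
      | zero => intro y; simp
      | succ k ih =>
        intro y
        rw [pow_succ', pow_succ', Module.End.mul_apply, Module.End.mul_apply]
        have hgy : g (LocalizedModule.mk ((S ^ k) y) 1) = LocalizedModule.mk (S ((S ^ k) y)) 1 :=
          LocalizedModule.map_mk (nonZeroDivisors R) S ((S ^ k) y) 1
        rw [ih, hgy]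
    -- x ∈ ker (g ^ (s*n)) in V
    have h1 : (g ^ (s * n)) (LocalizedModule.mk x 1) = 0 := by
      rw [key]
      have : (S ^ (s * n)) x = 0 := by
        rw [pow_mul, hS]; exact hx'
      rw [this]
      simp
    -- kernel chain of g stabilizes at d
    have h2 : LinearMap.ker (g ^ (s * n)) = LinearMap.ker (g ^ s) := by
      have hsn : d ≤ s * n := le_trans hsd (Nat.le_mul_of_pos_right s hn)
      rw [Module.End.ker_pow_eq_ker_pow_finrank_of_le hsn,
        Module.End.ker_pow_eq_ker_pow_finrank_of_le hsd]
    have h3 : (g ^ s) (LocalizedModule.mk x 1) = 0 := by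
      have := h2 ▸ (LinearMap.mem_ker.mpr h1)
      exact this
    -- hence T x is torsion, so T x = 0
    have h4 : (LocalizedModule.mk (T x) 1 : V) = 0 := by
      rw [← hS, ← key s x]; exact h3
    have h5 : (LocalizedModule.mkLinearMap (nonZeroDivisors R) M) (T x) = 0 := h4
    obtain ⟨c, hc⟩ := (IsLocalizedModule.eq_zero_iff (nonZeroDivisors R)
      (LocalizedModule.mkLinearMap (nonZeroDivisors R) M)).mp h5
    have hcne : (c : R) ≠ 0 := nonZeroDivisors.coe_ne_zero c
    have : (c : R) • T x = 0 := hc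
    rcases smul_eq_zero.mp this with h | h
    · exact absurd h hcne
    · exact h
  · -- ker T ≤ ker (T^n)
    intro x hx
    have hx' : T x = 0 := hx
    obtain ⟨m, rfl⟩ := Nat.exists_eq_add_of_le hn
    show (T ^ (1 + m)) x = 0
    rw [add_comm, pow_succ, Module.End.mul_apply, hx', map_zero]
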